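/- For every real number x with 0 < |x| < π, one has ((π² − x²)/π²)^(π²/6) ≤ (sin x)/x ≤ (π² − x²)/π². -/

import Mathlib

open Real Filter Finset Topology

lemma redheffer_pos (x : ℝ) (hx0 : 0 < x) (hx1 : x < π) :
    (1 - x ^ 2 / π ^ 2) ^ (π ^ 2 / 6) ≤ Real.sin x / x ∧
      Real.sin x / x ≤ 1 - x ^ 2 / π ^ 2 := by
  have hπ : (0:ℝ) < π := Real.pi_pos
  set t : ℝ := x ^ 2 / π ^ 2 with ht
  have ht0 : 0 < t := div_pos (pow_pos hx0 2) (pow_pos hπ 2)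
  have ht1 : t < 1 := by
    rw [ht, div_lt_one (pow_pos hπ 2)]
    nlinarith
  have h1t : 0 < 1 - t := by linarith
  set P : ℕ → ℝ := fun n => ∏ j ∈ Finset.range n, (1 - t / ((j : ℝ) + 1) ^ 2) with hP
  -- Euler product
  have hprod : Tendsto (fun n => x * P n) atTop (𝓝 (Real.sin x)) := by
    have h := Real.tendsto_euler_sin_prod (x / π)
    rw [show π * (x / π) = x by field_simp] at h
    refine Tendsto.congr (fun n => ?_) h
    rw [hP]
    congr 1
    refine Finset.prod_congr rfl fun j _ => ?_
    rw [ht, div_pow]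
  have hPtend : Tendsto P atTop (𝓝 (Real.sin x / x)) := by
    have := hprod.div_const x
    simpa [mul_div_assoc, mul_div_cancel_left₀ _ hx0.ne'] using this
  -- factor bounds
  have hfac_le : ∀ j : ℕ, t / ((j : ℝ) + 1) ^ 2 ≤ t := by
    intro j
    rw [div_le_iff₀ (by positivity)]
    nlinarith [mul_nonneg ht0.le (by positivity : (0:ℝ) ≤ (j:ℝ)^2 + 2*j)]
  have hfac_pos : ∀ j : ℕ, 0 < 1 - t / ((j : ℝ) + 1) ^ 2 := fun j => by
    have := hfac_le j; linarith
  set s : ℕ → ℝ := fun n => ∑ j ∈ Finset.range n, (1 : ℝ) / ((j : ℝ) + 1) ^ 2 with hs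
  -- Basel
  have hbasel : Tendsto s atTop (𝓝 (π ^ 2 / 6)) := by
    have h := hasSum_zeta_two
    have h2 : HasSum (fun n : ℕ => (1 : ℝ) / ((n : ℝ) + 1) ^ 2) (π ^ 2 / 6) := by
      have h3 := (hasSum_nat_add_iff (f := fun n : ℕ => (1 : ℝ) / (n : ℝ) ^ 2) 1).mpr (by simpa using h)
      convert h3 using 2 with n
      · rfl
      push_cast
      ring_nf
    simpa [hs] using h2.tendsto_sum_nat
  -- lower bound for P
  have hlow : ∀ n, (1 - t) ^ (s n) ≤ P n := by
    intro n
    induction n with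
    | zero => simp [hP, hs]
    | succ n ih =>
      have hsn : s (n + 1) = s n + 1 / ((n : ℝ) + 1) ^ 2 := by
        rw [hs]; exact Finset.sum_range_succ _ n
      have hPn : P (n + 1) = P n * (1 - t / ((n : ℝ) + 1) ^ 2) := by
        rw [hP]; exact Finset.prod_range_succ _ n
      rw [hsn, hPn, Real.rpow_add h1t]
      have hp1 : (0:ℝ) ≤ 1 / ((n : ℝ) + 1) ^ 2 := by positivity
      have hp2 : (1:ℝ) / ((n : ℝ) + 1) ^ 2 ≤ 1 := by
        rw [div_le_one (by positivity)]
        nlinarith [sq_nonneg ((n:ℝ)), Nat.cast_nonneg (α := ℝ) n]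
      have hb : (1 - t) ^ ((1:ℝ) / ((n : ℝ) + 1) ^ 2) ≤ 1 - t / ((n : ℝ) + 1) ^ 2 := by
        have := rpow_one_add_le_one_add_mul_self (s := -t) (by linarith) hp1 hp2
        rw [show (1:ℝ) + -t = 1 - t by ring] at this
        calc (1 - t) ^ ((1:ℝ) / ((n : ℝ) + 1) ^ 2) ≤ 1 + 1 / ((n : ℝ) + 1) ^ 2 * -t := this
          _ = 1 - t / ((n : ℝ) + 1) ^ 2 := by ring
      exact mul_le_mul ih hb (Real.rpow_nonneg h1t.le _) (by
        refine le_trans ?_ ih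
        positivity)
  -- lower bound limit
  have hlowlim : Tendsto (fun n => (1 - t) ^ (s n)) atTop (𝓝 ((1 - t) ^ (π ^ 2 / 6))) :=
    Tendsto.rpow tendsto_const_nhds hbasel (Or.inl h1t.ne')
  have hlower : (1 - t) ^ (π ^ 2 / 6) ≤ Real.sin x / x :=
    le_of_tendsto_of_tendsto' hlowlim hPtend hlow
  -- upper bound: P n ≤ 1 - t for n ≥ 1
  have hupper : Real.sin x / x ≤ 1 - t := by
    refine le_of_tendsto hPtend ?_
    filter_upwards [eventually_ge_atTop 1] with n hn
    obtain ⟨m, rfl⟩ := Nat.exists_eq_add_of_le hn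
    simp only [hP]
    rw [show 1 + m = m + 1 from by omega, Finset.prod_range_succ']
    have hrest : ∏ j ∈ Finset.range m, (1 - t / ((j + 1 : ℕ) + 1 : ℝ) ^ 2) ≤ 1 := by
      apply Finset.prod_le_one
      · intro j _
        have := hfac_le (j + 1)
        push_cast
        push_cast at this
        linarith [hfac_pos (j+1)]
      · intro j _
        have := hfac_le (j + 1)
        have h1 : t / ((j + 1 : ℕ) + 1 : ℝ) ^ 2 ≥ 0 := by positivity
        linarith
    have h0' : (1 : ℝ) - t / ((0:ℕ) + 1 : ℝ) ^ 2 = 1 - t := by norm_num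
    calc (∏ j ∈ Finset.range m, (1 - t / ((j + 1 : ℕ) + 1 : ℝ) ^ 2)) * (1 - t / ((0:ℕ) + 1 : ℝ) ^ 2)
        ≤ 1 * (1 - t / ((0:ℕ) + 1 : ℝ) ^ 2) := by
          apply mul_le_mul_of_nonneg_right hrest
          rw [h0']; linarith
      _ = 1 - t := by rw [one_mul, h0']
  exact ⟨hlower, hupper⟩

theorem stmt_0 (x : ℝ) (h0 : 0 < |x|) (h1 : |x| < π) :
    ((π ^ 2 - x ^ 2) / π ^ 2) ^ (π ^ 2 / 6) ≤ Real.sin x / x ∧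
      Real.sin x / x ≤ (π ^ 2 - x ^ 2) / π ^ 2 := by
  have key := redheffer_pos |x| (by exact h0) h1
  have h2 : |x| ^ 2 = x ^ 2 := sq_abs x
  have h3 : Real.sin |x| / |x| = Real.sin x / x := by
    rcases abs_choice x with h | h
    · rw [h]
    · rw [h, Real.sin_neg, neg_div_neg_eq]
  rw [h2, h3] at key
  have heq : (1:ℝ) - x ^ 2 / π ^ 2 = (π ^ 2 - x ^ 2) / π ^ 2 := by
    field_simp
  rw [heq] at key
  exact key
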